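/- Fix λ > 0, let x̃(d) (for real d > 0) be the unique positive solution of d·x = 1 + f_d(x) where f_d(x) = λ/(1+x)^d. Then x̃ is differentiable in d and dx̃/dd = -((1+x̃)·(f_d(x̃)·log(1+x̃) + x̃))/(d·(1+d)·x̃) ≤ 0; in particular x̃ is non-increasing in d. -/

import Mathlib

open Real ContinuousLinearMap Filter Topology

private lemma phi_strictMonoOn (lam e : ℝ) (hlam : 0 < lam) (he : 0 < e) :
    StrictMonoOn (fun y : ℝ => e * y - 1 - lam * (1 + y) ^ (-e)) (Set.Ioi (-1 : ℝ)) := by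
  intro a ha b hb hab
  simp only [Set.mem_Ioi] at ha hb
  have h1 : (0:ℝ) < 1 + a := by linarith
  have h2 : (1 + a : ℝ) < 1 + b := by linarith
  have h3 : (1 + b : ℝ) ^ (-e) < (1 + a) ^ (-e) :=
    Real.rpow_lt_rpow_of_neg h1 h2 (by linarith)
  have h4 : lam * (1 + b) ^ (-e) < lam * (1 + a) ^ (-e) := by
    exact mul_lt_mul_of_pos_left h3 hlam
  have h5 : e * a < e * b := mul_lt_mul_of_pos_left hab he
  dsimp only
  linarith

private lemma phi_deriv (lam d x : ℝ) (hx : 0 < 1 + x) :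
    HasStrictFDerivAt (fun p : ℝ × ℝ => p.1 * p.2 - 1 - lam * (1 + p.2) ^ (-p.1))
      ((x + lam * (1+x)^(-d) * Real.log (1+x)) • fst ℝ ℝ ℝ
        + (d + lam * d * (1+x)^(-d-1)) • snd ℝ ℝ ℝ) (d, x) := by
  have h1 : HasStrictFDerivAt (fun p : ℝ × ℝ => p.1 * p.2)
      (((d,x) : ℝ × ℝ).1 • snd ℝ ℝ ℝ + ((d,x) : ℝ × ℝ).2 • fst ℝ ℝ ℝ) (d, x) :=
    hasStrictFDerivAt_fst.mul hasStrictFDerivAt_snd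
  have hin : HasStrictFDerivAt (fun p : ℝ × ℝ => ((1 + p.2 : ℝ), (-p.1 : ℝ)))
      (((0 : ℝ × ℝ →L[ℝ] ℝ) + snd ℝ ℝ ℝ).prod (-(fst ℝ ℝ ℝ))) (d, x) :=
    HasStrictFDerivAt.prodMk ((hasStrictFDerivAt_const (1:ℝ) ((d,x) : ℝ × ℝ)).add hasStrictFDerivAt_snd)
      hasStrictFDerivAt_fst.neg
  have hr := Real.hasStrictFDerivAt_rpow_of_pos ((1+x), (-d)) hx
  have h2 := hr.comp ((d,x) : ℝ × ℝ) hin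
  have h3 := h2.const_mul lam
  have h4 := (h1.sub (hasStrictFDerivAt_const (1:ℝ) ((d,x) : ℝ × ℝ))).sub h3
  refine HasStrictFDerivAt.congr_fderiv h4 ?_
  ext u <;> simp <;> ring

private lemma key (lam : ℝ) (hlam : 0 < lam) (xt : ℝ → ℝ)
    (hxt : ∀ d > (0 : ℝ), 0 < xt d ∧ d * xt d = 1 + lam / (1 + xt d) ^ d)
    (d : ℝ) (hd : 0 < d) :
    HasDerivAt xt
        (-((1 + xt d) * ((lam / (1 + xt d) ^ d) * Real.log (1 + xt d) + xt d)) /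
          (d * (1 + d) * xt d)) d := by
  obtain ⟨hx0, heq⟩ := hxt d hd
  set x := xt d with hxdef
  have hx1 : (0:ℝ) < 1 + x := by linarith
  have hpow : (0:ℝ) < (1 + x) ^ d := Real.rpow_pos_of_pos hx1 d
  have hfeq : lam * (1 + x) ^ (-d) = lam / (1 + x) ^ d := by
    rw [Real.rpow_neg hx1.le]; ring
  set A : ℝ := x + lam * (1+x)^(-d) * Real.log (1+x) with hA
  set B : ℝ := d + lam * d * (1+x)^(-d-1) with hB
  have hBpos : 0 < B := by
    have : (0:ℝ) < (1+x)^(-d-1) := Real.rpow_pos_of_pos hx1 _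
    have := mul_pos (mul_pos hlam hd) this
    positivity
  have hBne : B ≠ 0 := ne_of_gt hBpos
  -- the map ψ and its derivative as a continuous linear equiv
  set Φ : ℝ × ℝ → ℝ := fun p => p.1 * p.2 - 1 - lam * (1 + p.2) ^ (-p.1) with hΦdef
  set ψ : ℝ × ℝ → ℝ × ℝ := fun p => (p.1, Φ p) with hψdef
  set fwd : (ℝ × ℝ) →L[ℝ] (ℝ × ℝ) :=
    (fst ℝ ℝ ℝ).prod (A • fst ℝ ℝ ℝ + B • snd ℝ ℝ ℝ) with hfwd
  set bwd : (ℝ × ℝ) →L[ℝ] (ℝ × ℝ) :=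
    (fst ℝ ℝ ℝ).prod (B⁻¹ • (snd ℝ ℝ ℝ - A • fst ℝ ℝ ℝ)) with hbwd
  have hleft : Function.LeftInverse bwd fwd := by
    intro p
    simp [hfwd, hbwd, Prod.ext_iff]
    field_simp
  have hright : Function.RightInverse bwd fwd := by
    intro p
    simp [hfwd, hbwd, Prod.ext_iff]
    field_simp
    try ring
  set L : (ℝ × ℝ) ≃L[ℝ] (ℝ × ℝ) :=
    ContinuousLinearEquiv.equivOfInverse fwd bwd hleft hright with hL
  have hψderiv : HasStrictFDerivAt ψ (L : (ℝ × ℝ) →L[ℝ] (ℝ × ℝ)) (d, x) := by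
    have hΦd : HasStrictFDerivAt Φ (A • fst ℝ ℝ ℝ + B • snd ℝ ℝ ℝ) (d, x) :=
      phi_deriv lam d x hx1
    exact HasStrictFDerivAt.prodMk hasStrictFDerivAt_fst hΦd
  have hΦ0 : Φ (d, x) = 0 := by
    show d * x - 1 - lam * (1 + x) ^ (-d) = 0
    rw [hfeq]; linarith
  have hψ0 : ψ (d, x) = (d, 0) := by
    show ((d, Φ (d,x)) : ℝ × ℝ) = (d, 0)
    rw [hΦ0]
  -- local inverse
  set inv := hψderiv.localInverse ψ _ _ with hinvdef
  have hι : Filter.Tendsto (fun e : ℝ => ((e, 0) : ℝ × ℝ)) (𝓝 d) (𝓝 (ψ (d, x))) := by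
    rw [hψ0]
    exact (continuous_id.prodMk continuous_const).tendsto d
  have hrinv : ∀ᶠ e in 𝓝 d, ψ (inv (e, 0)) = (e, 0) :=
    hι.eventually hψderiv.eventually_right_inverse
  have hcont : Filter.Tendsto (fun e : ℝ => inv (e, 0)) (𝓝 d) (𝓝 (d, x)) := by
    have := hψderiv.localInverse_tendsto.comp hι
    simpa [hinvdef, hψderiv.localInverse_apply_image, Function.comp_def] using this
  -- eventually xt e = (inv (e,0)).2
  have hev : ∀ᶠ e in 𝓝 d, xt e = (inv (e, 0)).2 := by
    have h1 : ∀ᶠ e in 𝓝 d, (0:ℝ) < (inv (e, 0)).2 := by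
      have : ∀ᶠ p in 𝓝 ((d, x) : ℝ × ℝ), (0:ℝ) < p.2 := by
        have : Set.univ ×ˢ Set.Ioi (0:ℝ) ∈ 𝓝 ((d, x) : ℝ × ℝ) :=
          prod_mem_nhds Filter.univ_mem (Ioi_mem_nhds hx0)
        filter_upwards [this] with p hp using hp.2
      exact hcont.eventually this
    have h2 : ∀ᶠ e in 𝓝 d, (0:ℝ) < e := eventually_gt_nhds hd
    filter_upwards [h1, h2, hrinv] with e h1e h2e h3e
    obtain ⟨hxe, heqe⟩ := hxt e h2e
    have hfst : (inv (e, 0)).1 = e := congrArg Prod.fst h3e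
    have hΦe : Φ (inv (e, 0)) = 0 := congrArg Prod.snd h3e
    rw [hΦdef] at hΦe
    simp only [hfst] at hΦe
    have hΦxt : e * xt e - 1 - lam * (1 + xt e) ^ (-e) = 0 := by
      have hx1e : (0:ℝ) < 1 + xt e := by linarith
      rw [Real.rpow_neg hx1e.le]
      rw [heqe]; ring
    have hmono := phi_strictMonoOn lam e hlam h2e
    have hm1 : xt e ∈ Set.Ioi (-1 : ℝ) := by simp only [Set.mem_Ioi]; linarith
    have hm2 : (inv (e, 0)).2 ∈ Set.Ioi (-1 : ℝ) := by simp only [Set.mem_Ioi]; linarith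
    exact hmono.injOn hm1 hm2 (hΦxt.trans hΦe.symm)
  -- derivative of e ↦ (inv (e,0)).2
  have hinv_deriv : HasStrictFDerivAt inv
      ((L.symm : (ℝ × ℝ) →L[ℝ] (ℝ × ℝ))) (ψ (d, x)) := hψderiv.to_localInverse
  have hι' : HasFDerivAt (fun e : ℝ => ((e, 0) : ℝ × ℝ)) (ContinuousLinearMap.inl ℝ ℝ ℝ) d :=
    (ContinuousLinearMap.inl ℝ ℝ ℝ).hasFDerivAt
  have hcomp : HasFDerivAt (fun e : ℝ => inv (e, 0))
      ((L.symm : (ℝ × ℝ) →L[ℝ] (ℝ × ℝ)).comp (ContinuousLinearMap.inl ℝ ℝ ℝ)) d := by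
    rw [hψ0] at hinv_deriv
    exact hinv_deriv.hasFDerivAt.comp d hι'
  have hg : HasDerivAt (fun e : ℝ => (inv (e, 0)).2) (-(A / B)) d := by
    have h := (hcomp.snd).hasDerivAt
    refine h.congr_deriv ?_
    symm
    show -(A/B) = (((L.symm : (ℝ × ℝ) →L[ℝ] (ℝ × ℝ)).comp (ContinuousLinearMap.inl ℝ ℝ ℝ)) 1).2
    rw [hL, ContinuousLinearEquiv.symm_equivOfInverse]
    simp [hbwd]
    try field_simp
    try ring
  have hxt_deriv : HasDerivAt xt (-(A / B)) d :=
    hg.congr_of_eventuallyEq hev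
  convert hxt_deriv using 1
  have hpow2 : (1+x)^(-d-1) = (1+x)^(-d) / (1+x) := by
    rw [← Real.rpow_sub_one (ne_of_gt hx1)]
    try ring_nf
  have hxne : x ≠ 0 := ne_of_gt hx0
  have hdne : d ≠ 0 := ne_of_gt hd
  have h1xne : (1:ℝ) + x ≠ 0 := ne_of_gt hx1
  have hf : lam * (1+x)^(-d) = d * x - 1 := by rw [hfeq]; field_simp at heq ⊢; linarith
  have hAeq : A = x + (d * x - 1) * Real.log (1+x) := by rw [hA, hf]
  have hBeq : B = d * (1+d) * x / (1+x) := by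
    rw [hB, hpow2]
    field_simp
    linear_combination hf
  rw [hAeq, hBeq, ← hfeq, hf]
  have hden : d * (1+d) * x ≠ 0 := by positivity
  field_simp
  ring

theorem fixed_point_deriv_nonpos (lam : ℝ) (hlam : 0 < lam) (xt : ℝ → ℝ)
    (hxt : ∀ d > (0 : ℝ), 0 < xt d ∧ d * xt d = 1 + lam / (1 + xt d) ^ d) :
    (∀ d > (0 : ℝ),
      HasDerivAt xt
        (-((1 + xt d) * ((lam / (1 + xt d) ^ d) * Real.log (1 + xt d) + xt d)) /
          (d * (1 + d) * xt d)) d ∧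
      -((1 + xt d) * ((lam / (1 + xt d) ^ d) * Real.log (1 + xt d) + xt d)) /
          (d * (1 + d) * xt d) ≤ 0) ∧
    AntitoneOn xt (Set.Ioi 0) := by
  have hsign : ∀ d > (0:ℝ),
      -((1 + xt d) * ((lam / (1 + xt d) ^ d) * Real.log (1 + xt d) + xt d)) /
          (d * (1 + d) * xt d) ≤ 0 := by
    intro d hd
    obtain ⟨hx0, _⟩ := hxt d hd
    have hx1 : (0:ℝ) < 1 + xt d := by linarith
    have hlog : 0 < Real.log (1 + xt d) := Real.log_pos (by linarith)
    have hpow : (0:ℝ) < (1 + xt d) ^ d := Real.rpow_pos_of_pos hx1 d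
    apply div_nonpos_of_nonpos_of_nonneg
    · have : 0 ≤ (1 + xt d) * ((lam / (1 + xt d) ^ d) * Real.log (1 + xt d) + xt d) := by
        positivity
      linarith
    · positivity
  refine ⟨fun d hd => ⟨key lam hlam xt hxt d hd, hsign d hd⟩, ?_⟩
  apply antitoneOn_of_deriv_nonpos (convex_Ioi 0)
  · intro d hd
    exact (key lam hlam xt hxt d hd).continuousAt.continuousWithinAt
  · intro d hd
    rw [interior_Ioi] at hd
    exact (key lam hlam xt hxt d hd).differentiableAt.differentiableWithinAt
  · intro d hd
    rw [interior_Ioi] at hd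
    rw [(key lam hlam xt hxt d hd).deriv]
    exact hsign d hd
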